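/- Let F be a probability measure on [0,1] with F({0}) = 0, let Q : [0,1] → [0,1] be a quantile-based bidding strategy (strictly increasing and absolutely continuous), and let s_Q be the corresponding bidding strategy. Then for every y in [0,1], with h = Q(y), the expected utility against the deterministic highest competing bid h satisfies U_F(s_Q, δ_h) = ∫_y^1 (F⁻(t) − Q(t)) dt. Moreover, the induced bid distribution P_{s_Q,F} equals the pushforward of the uniform distribution on [0,1] under Q. -/

import Mathlib

open MeasureTheory ProbabilityTheory Set

noncomputable section

namespace FPA

/-- The unit interval `[0,1] ⊆ ℝ`. -/
def Iu : Set ℝ := Set.Icc 0 1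

/-- `μ` is a probability measure on `[0,1]`. -/
def IsProbOn (μ : Measure ℝ) : Prop := IsProbabilityMeasure μ ∧ μ Iu = 1

/-- A bidding strategy: a Markov kernel from `[0,1]` to `[0,1]`. -/
def IsStrategy (s : Kernel ℝ ℝ) : Prop := IsMarkovKernel s ∧ ∀ v : ℝ, s v Iu = 1

/-- The buyer's utility `u(b,h;v) = (v−b)·1{b ≥ h}`. -/
def util (b h v : ℝ) : ℝ := (v - b) * (if h ≤ b then 1 else 0)

/-- Expected utility `U_F(s,H)`. -/
def eUtil (F : Measure ℝ) (s : Kernel ℝ ℝ) (H : Measure ℝ) : ℝ :=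
  ∫ v, ∫ h, ∫ b, util b h v ∂(s v) ∂H ∂F

/-- Regret `Reg_F(s,H) = sup_{s'∈S} U_F(s',H) − U_F(s,H)`. -/
def regret (F : Measure ℝ) (s : Kernel ℝ ℝ) (H : Measure ℝ) : ℝ :=
  (⨆ s' : {k : Kernel ℝ ℝ // IsStrategy k}, eUtil F s'.1 H) - eUtil F s H

/-- Induced bid distribution `P_{s,F}`. -/
def bidDist (F : Measure ℝ) (s : Kernel ℝ ℝ) : Measure ℝ := F.bind (fun v => s v)

/-- CDF of a measure on `[0,1]`: `F(x) = F([0,x])`. -/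
def cdf01 (F : Measure ℝ) (x : ℝ) : ℝ := (F (Set.Iic x)).toReal

/-- Generalized inverse `F⁻(t) = inf {x ∈ [0,1] : F(x) ≥ t}`. -/
def qinv (F : Measure ℝ) (t : ℝ) : ℝ := sInf {x | x ∈ Iu ∧ t ≤ cdf01 F x}

/-- Full-information benchmark against a deterministic highest competing bid `h`. -/
def bench (F : Measure ℝ) (h : ℝ) : ℝ := ∫ v, (v - h) * (if h ≤ v then 1 else 0) ∂F

/-- Full-information regret `R_F(s,H)`. -/
def fregret (F : Measure ℝ) (s : Kernel ℝ ℝ) (H : Measure ℝ) : ℝ :=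
  (∫ h, bench F h ∂H) - eUtil F s H

/-- Absolute continuity of a function on `[0,1]` (FTC characterization). -/
def AbsContOn01 (f : ℝ → ℝ) : Prop :=
  ∃ g : ℝ → ℝ, IntervalIntegrable g volume 0 1 ∧
    ∀ x ∈ Iu, f x = f 0 + ∫ t in (0:ℝ)..x, g t

/-- The set of quantiles corresponding to value `v`: `Y(v) = {y ∈ [0,1] : F⁻(y) = v}`. -/
def Yset (F : Measure ℝ) (v : ℝ) : Set ℝ := {y | y ∈ Iu ∧ qinv F y = v}

/-- Uniform distribution on a set `A ⊆ ℝ`. -/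
def unifOn (A : Set ℝ) : Measure ℝ := (volume A)⁻¹ • volume.restrict A

/-- `s` is the bidding strategy corresponding to the quantile-based bidding strategy `Q`:
it bids `Q(F(v))` when `F({v}) = 0`, and the pushforward under `Q` of the uniform
distribution on `Y(v)` when `F({v}) > 0`. -/
def IsQuantileStrategy (F : Measure ℝ) (Q : ℝ → ℝ) (s : Kernel ℝ ℝ) : Prop :=
  IsStrategy s ∧ ∀ v ∈ Iu,
    s v = if F {v} = 0 then Measure.dirac (Q (cdf01 F v)) else (unifOn (Yset F v)).map Q

/-- The candidate worst-case highest-competing-bid CDF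
`H*(x) = exp(−∫_{(Q*)⁻¹(x)}^1 dt/(1−F(Q*(t))))`. -/
def Hstar (F : Measure ℝ) (Q : ℝ → ℝ) (x : ℝ) : ℝ :=
  Real.exp (-(∫ t in (Function.invFunOn Q Iu x)..(1:ℝ), 1 / (1 - cdf01 F (Q t))))


section Aux

open Filter Topology
open scoped ENNReal

lemma Iu_meas : MeasurableSet Iu := measurableSet_Icc

lemma Iu_vol : volume Iu = 1 := by
  simp [Iu, Real.volume_Icc]

/-- clamp a real number into `[0,1]`. -/
def clamp01 (x : ℝ) : ℝ := min (max x 0) 1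

lemma clamp01_mem (x : ℝ) : clamp01 x ∈ Iu :=
  ⟨le_min (le_max_right _ _) zero_le_one, min_le_right _ _⟩

lemma clamp01_of_mem {x : ℝ} (hx : x ∈ Iu) : clamp01 x = x := by
  rcases hx with ⟨h0, h1⟩
  simp [clamp01, max_eq_left h0, min_eq_left h1]

lemma clamp01_mono : Monotone clamp01 := fun a b hab => by
  dsimp [clamp01]; exact min_le_min (max_le_max hab le_rfl) le_rfl

section F
variable {F : Measure ℝ}

lemma F_ne_top (hF : IsProbOn F) (A : Set ℝ) : F A ≠ ⊤ := by
  haveI := hF.1; exact measure_ne_top F A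

lemma cdf_mono (hF : IsProbOn F) : Monotone (cdf01 F) := fun a b hab =>
  ENNReal.toReal_mono (F_ne_top hF _) (measure_mono (Iic_subset_Iic.2 hab))

lemma F_Iic (hF : IsProbOn F) (x : ℝ) : F (Iic x) = ENNReal.ofReal (cdf01 F x) :=
  (ENNReal.ofReal_toReal (F_ne_top hF _)).symm

lemma cdf_nonneg' (x : ℝ) : 0 ≤ cdf01 F x := ENNReal.toReal_nonneg

lemma cdf_le_one' (hF : IsProbOn F) (x : ℝ) : cdf01 F x ≤ 1 := by
  haveI := hF.1
  have h : F (Iic x) ≤ 1 := prob_le_one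
  simpa [cdf01] using ENNReal.toReal_mono (by simp) h

lemma cdf_mem_Iu (hF : IsProbOn F) (x : ℝ) : cdf01 F x ∈ Iu :=
  ⟨cdf_nonneg' x, cdf_le_one' hF x⟩

lemma F_compl (hF : IsProbOn F) : F Iuᶜ = 0 := by
  haveI := hF.1
  rw [measure_compl Iu_meas (F_ne_top hF _), hF.2, measure_univ]
  simp

lemma cdf_one (hF : IsProbOn F) : cdf01 F 1 = 1 := by
  haveI := hF.1
  have h1 : F (Iic 1) = 1 := by
    refine le_antisymm prob_le_one ?_
    rw [← hF.2]
    exact measure_mono (fun x hx => hx.2)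
  rw [cdf01, h1]; simp

lemma cdf_zero (hF : IsProbOn F) (hF0 : F {0} = 0) : cdf01 F 0 = 0 := by
  have h : F (Iic (0:ℝ)) = 0 := by
    rw [show Iic (0:ℝ) = Iio 0 ∪ {0} from (Iio_union_right).symm]
    refine le_antisymm ?_ (zero_le)
    refine le_trans (measure_union_le _ _) ?_
    have h1 : F (Iio (0:ℝ)) = 0 :=
      measure_mono_null (fun x (hx : x < 0) => fun hx' => absurd hx'.1 (not_le.2 hx)) (F_compl hF)
    simp [h1, hF0]
  rw [cdf01, h]; simp

/-- cdf01 agrees with Mathlib's cdf. -/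
lemma cdf01_eq (hF : IsProbOn F) : cdf01 F = ⇑(ProbabilityTheory.cdf F) := by
  haveI := hF.1
  funext x
  rw [ProbabilityTheory.cdf_eq_real]; rfl

end F
end Aux
section Tq
open Filter Topology
open scoped ENNReal

/-- A globally monotone version of `qinv`. -/
def Tq (F : Measure ℝ) (t : ℝ) : ℝ := sInf {x | x ∈ Iu ∧ min t 1 ≤ cdf01 F x}

variable {F : Measure ℝ}

lemma qinv_eq_Tq {t : ℝ} (ht : t ≤ 1) : qinv F t = Tq F t := by
  rw [qinv, Tq, min_eq_left ht]

lemma one_mem_S (hF : IsProbOn F) (t : ℝ) : (1:ℝ) ∈ {x | x ∈ Iu ∧ min t 1 ≤ cdf01 F x} :=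
  ⟨⟨zero_le_one, le_rfl⟩, by rw [cdf_one hF]; exact min_le_right _ _⟩

lemma S_bdd (t : ℝ) : BddBelow {x | x ∈ Iu ∧ min t 1 ≤ cdf01 F x} :=
  ⟨0, fun x hx => hx.1.1⟩

lemma Tq_mem_Iu (hF : IsProbOn F) (t : ℝ) : Tq F t ∈ Iu :=
  ⟨le_csInf ⟨1, one_mem_S hF t⟩ (fun x hx => hx.1.1), csInf_le (S_bdd t) (one_mem_S hF t)⟩

lemma Tq_mono (hF : IsProbOn F) : Monotone (Tq F) := fun a b hab =>
  csInf_le_csInf (S_bdd a) ⟨1, one_mem_S hF b⟩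
    (fun x hx => ⟨hx.1, le_trans (min_le_min hab le_rfl) hx.2⟩)

lemma Tq_le_of_mem (hF : IsProbOn F) {t x : ℝ} (hx : x ∈ Iu) (h : min t 1 ≤ cdf01 F x) :
    Tq F t ≤ x := csInf_le (S_bdd t) ⟨hx, h⟩

/-- Right continuity of the cdf gives `t ≤ F(T(t))`. -/
lemma le_cdf_Tq (hF : IsProbOn F) {t : ℝ} (ht : t ∈ Iu) : t ≤ cdf01 F (Tq F t) := by
  set c := Tq F t with hc
  have hcIu : c ∈ Iu := Tq_mem_Iu hF t
  rcases eq_or_lt_of_le hcIu.2 with h1 | h1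
  · rw [h1, cdf_one hF]; exact ht.2
  · -- c < 1 : use right continuity at c
    have key : ∀ x ∈ Ioc c 1, t ≤ cdf01 F x := by
      intro x hx
      obtain ⟨x₀, hx₀S, hx₀lt⟩ :=
        exists_lt_of_csInf_lt (⟨1, one_mem_S hF t⟩ : Set.Nonempty _) hx.1
      calc t = min t 1 := (min_eq_left ht.2).symm
        _ ≤ cdf01 F x₀ := hx₀S.2
        _ ≤ cdf01 F x := cdf_mono hF hx₀lt.le
    have hrc : Tendsto (cdf01 F) (𝓝[>] c) (𝓝 (cdf01 F c)) := by
      rw [cdf01_eq hF]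
      exact ((ProbabilityTheory.cdf F).right_continuous c).mono_left
        (nhdsWithin_mono c Ioi_subset_Ici_self)
    refine ge_of_tendsto hrc ?_
    filter_upwards [Ioc_mem_nhdsGT_of_mem (⟨le_rfl, h1⟩ : c ∈ Ico c 1)] with x hx
    exact key x hx

/-- characterization needed for the pushforward identity. -/
lemma Tq_le_iff (hF : IsProbOn F) {t x : ℝ} (ht : t ∈ Iu) (hx : x ∈ Iu) :
    Tq F t ≤ x ↔ t ≤ cdf01 F x := by
  constructor
  · intro h
    exact le_trans (le_cdf_Tq hF ht) (cdf_mono hF h)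
  · intro h
    exact Tq_le_of_mem hF hx (by rwa [min_eq_left ht.2])

lemma Tq_measurable (hF : IsProbOn F) : Measurable (Tq F) := (Tq_mono hF).measurable

/-- The inverse transform pushforward identity. -/
lemma map_Tq (hF : IsProbOn F) : F = (volume.restrict Iu).map (Tq F) := by
  haveI := hF.1
  have hTm := Tq_measurable hF
  haveI : IsFiniteMeasure ((volume.restrict Iu).map (Tq F)) := by
    constructor
    rw [Measure.map_apply hTm MeasurableSet.univ]
    simp only [Set.preimage_univ, Measure.restrict_apply_univ, Iu_vol]
    exact ENNReal.one_lt_top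
  refine (Measure.ext_of_Iic ((volume.restrict Iu).map (Tq F)) F ?_).symm
  intro a
  rw [Measure.map_apply hTm measurableSet_Iic,
    Measure.restrict_apply (hTm measurableSet_Iic)]
  rcases lt_or_ge a 0 with ha | ha
  · have h1 : Tq F ⁻¹' Iic a ∩ Iu = ∅ := by
      ext t
      simp only [mem_inter_iff, mem_preimage, mem_Iic, mem_empty_iff_false, iff_false, not_and]
      intro hta htIu
      exact absurd (le_trans (Tq_mem_Iu hF t).1 hta) (not_le.2 ha)
    have h2 : F (Iic a) = 0 :=
      measure_mono_null (fun x (hx : x ≤ a) => fun hx' => absurd hx'.1 (not_le.2 (lt_of_le_of_lt hx ha))) (F_compl hF)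
    rw [h1, h2, measure_empty]
  · rcases le_or_gt a 1 with ha1 | ha1
    · have h1 : Tq F ⁻¹' Iic a ∩ Iu = Icc 0 (cdf01 F a) := by
        ext t
        simp only [mem_inter_iff, mem_preimage, mem_Iic, mem_Icc]
        constructor
        · rintro ⟨hta, htIu⟩
          exact ⟨htIu.1, (Tq_le_iff hF htIu ⟨ha, ha1⟩).1 hta⟩
        · rintro ⟨h0, h2⟩
          have htIu : t ∈ Iu := ⟨h0, le_trans h2 (cdf_le_one' hF a)⟩
          exact ⟨(Tq_le_iff hF htIu ⟨ha, ha1⟩).2 h2, htIu⟩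
      rw [h1, Real.volume_Icc, F_Iic hF, sub_zero]
    · have h1 : Tq F ⁻¹' Iic a ∩ Iu = Iu := by
        refine inter_eq_right.2 (fun t htIu => ?_)
        exact le_trans (Tq_mem_Iu hF t).2 ha1.le
      have h2 : F (Iic a) = 1 := by
        refine le_antisymm prob_le_one ?_
        rw [← hF.2]
        exact measure_mono (fun x hx => le_trans hx.2 ha1.le)
      rw [h1, h2, Iu_vol]

end Tq
section Yset
open Filter Topology
open scoped ENNReal

variable {F : Measure ℝ}

/-- left limit of the cdf. -/
def cdfl (F : Measure ℝ) (v : ℝ) : ℝ := (F (Iio v)).toReal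

lemma cdfl_le_cdf (hF : IsProbOn F) (v : ℝ) : cdfl F v ≤ cdf01 F v :=
  ENNReal.toReal_mono (F_ne_top hF _) (measure_mono Iio_subset_Iic_self)

lemma cdfl_nonneg (v : ℝ) : 0 ≤ cdfl F v := ENNReal.toReal_nonneg

/-- continuity from below: if `y < F(v⁻)` then some `x ∈ [0,v)` has `y ≤ F(x)`. -/
lemma exists_lt_of_lt_cdfl (hF : IsProbOn F) {v y : ℝ} (hv0 : 0 < v) (hy : 0 ≤ y)
    (h : y < cdfl F v) : ∃ x, 0 ≤ x ∧ x < v ∧ y ≤ cdf01 F x := by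
  by_contra hcon
  push_neg at hcon
  set u : ℕ → ℝ := fun n => v - v / (n + 1) with hu
  have hu_mem : ∀ n : ℕ, 0 ≤ u n ∧ u n < v := by
    intro n
    constructor
    · have h1 : v / (n + 1) ≤ v := by
        rw [div_le_iff₀ (by positivity)]
        nlinarith [hv0.le]
      simp [hu]; linarith
    · have : 0 < v / (n + 1) := by positivity
      simp [hu]; linarith
  have hlt : ∀ n, cdf01 F (u n) < y := fun n => hcon _ (hu_mem n).1 (hu_mem n).2
  have hmono : Monotone (fun n : ℕ => Iic (u n)) := by
    intro m n hmn
    apply Iic_subset_Iic.2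
    have : v / (n + 1) ≤ v / (m + 1) := by
      apply div_le_div_of_nonneg_left hv0.le (by positivity)
      exact_mod_cast by exact_mod_cast add_le_add_left (Nat.cast_le.2 hmn) 1
    simp only [hu]; linarith
  have hUnion : (⋃ n, Iic (u n)) = Iio v := by
    ext x
    simp only [mem_iUnion, mem_Iic, mem_Iio]
    constructor
    · rintro ⟨n, hn⟩; exact lt_of_le_of_lt hn (hu_mem n).2
    · intro hx
      obtain ⟨n, hn⟩ := exists_nat_gt (v / (v - x))
      refine ⟨n, ?_⟩
      have hvx : 0 < v - x := by linarith
      have : v / (n+1) ≤ v - x := by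
        rw [div_le_iff₀ (by positivity)]
        have h2 : v < n * (v - x) := by
          have h3 := (div_lt_iff₀ hvx).1 hn
          linarith
        nlinarith [hvx]
      simp only [hu]; linarith
  have htend : Tendsto (fun n => F (Iic (u n))) atTop (𝓝 (F (Iio v))) := by
    have := tendsto_measure_iUnion_atTop (μ := F) hmono
    rwa [hUnion] at this
  have hle : F (Iio v) ≤ ENNReal.ofReal y := by
    refine le_of_tendsto htend (Eventually.of_forall fun n => ?_)
    rw [F_Iic hF]
    exact ENNReal.ofReal_le_ofReal (hlt n).le
  have : cdfl F v ≤ y := by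
    rw [cdfl]
    calc (F (Iio v)).toReal ≤ (ENNReal.ofReal y).toReal :=
          ENNReal.toReal_mono (by simp) hle
      _ = y := ENNReal.toReal_ofReal hy
  linarith

/-- The set of quantiles of an atom `v` contains `(F(v⁻), F(v)]`. -/
lemma Ioc_subset_Yset (hF : IsProbOn F) {v : ℝ} (hv : v ∈ Iu) :
    Ioc (cdfl F v) (cdf01 F v) ⊆ Yset F v := by
  rintro y ⟨hy1, hy2⟩
  have hyIu : y ∈ Iu := ⟨le_trans (cdfl_nonneg v) hy1.le, le_trans hy2 (cdf_le_one' hF v)⟩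
  refine ⟨hyIu, ?_⟩
  rw [qinv_eq_Tq hyIu.2]
  refine le_antisymm (Tq_le_of_mem hF hv (by rwa [min_eq_left hyIu.2])) ?_
  refine le_csInf ⟨1, one_mem_S hF y⟩ ?_
  rintro x ⟨hxIu, hx⟩
  by_contra hlt
  push_neg at hlt
  have h1 : cdf01 F x ≤ cdfl F v :=
    ENNReal.toReal_mono (F_ne_top hF _) (measure_mono (Iic_subset_Iio.2 hlt))
  rw [min_eq_left hyIu.2] at hx
  linarith

/-- The set of quantiles of `v ≠ 0` is contained in `[F(v⁻), F(v)]`. -/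
lemma Yset_subset_Icc (hF : IsProbOn F) {v : ℝ} (hv : v ∈ Iu) (hv0 : 0 < v) :
    Yset F v ⊆ Icc (cdfl F v) (cdf01 F v) := by
  rintro y ⟨hyIu, hy⟩
  rw [qinv_eq_Tq hyIu.2] at hy
  constructor
  · by_contra hlt
    push_neg at hlt
    obtain ⟨x, hx0, hxv, hxy⟩ := exists_lt_of_lt_cdfl hF hv0 hyIu.1 hlt
    have : Tq F y ≤ x :=
      Tq_le_of_mem hF ⟨hx0, le_trans hxv.le hv.2⟩ (by rwa [min_eq_left hyIu.2])
    rw [hy] at this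
    linarith
  · have := le_cdf_Tq hF hyIu
    rwa [hy] at this

lemma F_singleton (hF : IsProbOn F) (v : ℝ) :
    F {v} = ENNReal.ofReal (cdf01 F v - cdfl F v) := by
  haveI := hF.1
  have hsplit : F (Iic v) = F (Iio v) + F {v} := by
    rw [show Iic v = Iio v ∪ {v} from (Iio_union_right).symm,
      measure_union (by simp [disjoint_singleton_right]) (measurableSet_singleton v)]
  have h1 : cdf01 F v - cdfl F v = (F {v}).toReal := by
    rw [cdf01, cdfl, hsplit, ENNReal.toReal_add (F_ne_top hF _) (F_ne_top hF _)]
    ring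
  rw [h1, ENNReal.ofReal_toReal (F_ne_top hF _)]

lemma Yset_measurable (hF : IsProbOn F) {v : ℝ} (hv : v ∈ Iu) (hv0 : 0 < v) :
    MeasurableSet (Yset F v) := by
  have h1 : Yset F v = Ioc (cdfl F v) (cdf01 F v) ∪ (Yset F v \ Ioc (cdfl F v) (cdf01 F v)) :=
    (union_diff_cancel (Ioc_subset_Yset hF hv)).symm
  rw [h1]
  refine MeasurableSet.union measurableSet_Ioc (Set.Countable.measurableSet ?_)
  refine Countable.mono ?_ (countable_singleton (cdfl F v))
  rintro y ⟨hy1, hy2⟩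
  obtain ⟨hl, hr⟩ := Yset_subset_Icc hF hv hv0 hy1
  simp only [mem_Ioc, not_and_or, not_lt, not_le] at hy2
  rcases hy2 with h | h
  · simp [le_antisymm h hl]
  · linarith

lemma Yset_vol (hF : IsProbOn F) {v : ℝ} (hv : v ∈ Iu) (hv0 : 0 < v) :
    volume (Yset F v) = F {v} := by
  rw [F_singleton hF v]
  refine le_antisymm ?_ ?_
  · refine le_trans (measure_mono (Yset_subset_Icc hF hv hv0)) ?_
    rw [Real.volume_Icc]
  · refine le_trans ?_ (measure_mono (Ioc_subset_Yset hF hv))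
    rw [Real.volume_Ioc]

/-- For non-atoms, `F(T(t)) = t`. -/
lemma cdf_Tq_eq (hF : IsProbOn F) (hF0 : F {0} = 0) {t : ℝ} (ht : t ∈ Iu)
    (h0 : F {Tq F t} = 0) : cdf01 F (Tq F t) = t := by
  set v := Tq F t with hv
  have hvIu : v ∈ Iu := Tq_mem_Iu hF t
  rcases eq_or_lt_of_le hvIu.1 with hveq | hvpos
  · -- v = 0
    have h1 : cdf01 F v = 0 := by rw [← hveq]; exact cdf_zero hF hF0
    have h2 := le_cdf_Tq hF ht
    rw [← hv, h1] at h2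
    rw [h1]; linarith [ht.1]
  · have htY : t ∈ Yset F v := ⟨ht, by rw [qinv_eq_Tq ht.2]⟩
    obtain ⟨hl, hr⟩ := Yset_subset_Icc hF hvIu hvpos htY
    have : cdf01 F v - cdfl F v ≤ 0 := by
      by_contra hc
      push_neg at hc
      rw [F_singleton hF v] at h0
      rw [ENNReal.ofReal_eq_zero] at h0
      linarith
    linarith

/-- atoms are countable. -/
lemma atoms_countable (hF : IsProbOn F) : Set.Countable {v : ℝ | F {v} ≠ 0} := by
  haveI := hF.1
  have h := Measure.countable_meas_pos_of_disjoint_iUnion (μ := F)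
    (As := fun v : ℝ => ({v} : Set ℝ)) (fun v => measurableSet_singleton v)
    (fun v w hvw => by simp [Function.onFun, disjoint_singleton, hvw])
  refine Countable.mono ?_ h
  intro v hv
  exact pos_iff_ne_zero.2 hv

lemma atoms_subset_Iu (hF : IsProbOn F) {v : ℝ} (hv : F {v} ≠ 0) : v ∈ Iu := by
  by_contra hc
  exact hv (measure_mono_null (by simpa using hc) (F_compl hF))

lemma atom_pos (hF0 : F {0} = 0) {v : ℝ} (hv : F {v} ≠ 0) (hvIu : v ∈ Iu) : 0 < v := by
  rcases eq_or_lt_of_le hvIu.1 with h | h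
  · exact absurd (h ▸ hF0) hv
  · exact h

/-- modification on a countable set preserves measurability. -/
lemma measurable_of_countable_ne {f g : ℝ → ℝ} (hf : Measurable f)
    (h : Set.Countable {x | f x ≠ g x}) : Measurable g := by
  intro t ht
  have h1 : g ⁻¹' t = (f ⁻¹' t \ {x | f x ≠ g x}) ∪ (g ⁻¹' t ∩ {x | f x ≠ g x}) := by
    ext x
    by_cases hx : f x = g x <;> simp [mem_diff, hx, mem_setOf_eq]
  rw [h1]
  exact ((hf ht).diff h.measurableSet).union
    ((h.mono inter_subset_right).measurableSet)

end Yset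
section Key
open Filter Topology
open scoped ENNReal

lemma key_identity (F : Measure ℝ) (hF : IsProbOn F) (hF0 : F {0} = 0)
    (Q : ℝ → ℝ) (hQmono : StrictMonoOn Q Iu) (hQmaps : MapsTo Q Iu Iu)
    (s : Kernel ℝ ℝ) (hs : IsQuantileStrategy F Q s)
    (f : ℝ → ℝ → ℝ) (hfm : Measurable (Function.uncurry f))
    (C : ℝ) (hfb : ∀ v ∈ Iu, ∀ b ∈ Iu, |f v b| ≤ C) :
    Integrable (fun v => ∫ b, f v b ∂ s v) F ∧
    ∫ v, (∫ b, f v b ∂ s v) ∂F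
      = ∫ t in Iu, f (Tq F t) (Q (clamp01 t)) ∂volume := by
  haveI := hF.1
  obtain ⟨⟨hsM, hsIu⟩, hsq⟩ := hs
  haveI := hsM
  -- notation
  set Qc : ℝ → ℝ := fun t => Q (clamp01 t) with hQcdef
  have hQc_mono : Monotone Qc := fun a b hab =>
    hQmono.monotoneOn (clamp01_mem a) (clamp01_mem b) (clamp01_mono hab)
  have hQc_meas : Measurable Qc := hQc_mono.measurable
  have hQc_memIu : ∀ t, Qc t ∈ Iu := fun t => hQmaps (clamp01_mem t)
  have hQc_eq : ∀ t ∈ Iu, Qc t = Q t := fun t ht => by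
    simp only [hQcdef, clamp01_of_mem ht]
  set N : Set ℝ := {v : ℝ | F {v} ≠ 0} with hNdef
  have hNc : N.Countable := atoms_countable hF
  have hNmeas : MeasurableSet N := hNc.measurableSet
  set Φ : ℝ → ℝ := fun v => ∫ b, f v b ∂ s v with hΦdef
  set ψ : ℝ → ℝ := fun v => f v (Qc (cdf01 F v)) with hψdef
  have hψmeas : Measurable ψ :=
    hfm.comp (measurable_id.prodMk (hQc_meas.comp (cdf_mono hF).measurable))
  have aeIu : ∀ᵐ v ∂F, v ∈ Iu := by
    rw [ae_iff]
    exact F_compl hF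
  have hΦb : ∀ v ∈ Iu, |Φ v| ≤ C := by
    intro v hv
    rw [← Real.norm_eq_abs]
    have hae : ∀ᵐ b ∂ s v, ‖f v b‖ ≤ C := by
      have hcompl : s v Iuᶜ = 0 := by
        rw [measure_compl Iu_meas (measure_ne_top _ _), hsIu v, measure_univ]
        simp
      filter_upwards [mem_ae_iff.mpr hcompl] with b hb
      rw [Real.norm_eq_abs]
      exact hfb v hv b hb
    calc ‖∫ b, f v b ∂ s v‖ ≤ C * ((s v) univ).toReal :=
          norm_integral_le_of_norm_le_const hae
      _ = C := by simp
  have hΦψ : ∀ v ∈ Iu, F {v} = 0 → Φ v = ψ v := by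
    intro v hv h0
    simp only [hΦdef, hψdef]
    rw [hsq v hv, if_pos h0, integral_dirac (f v), hQc_eq _ (cdf_mem_Iu hF v)]
  set g : ℝ → ℝ := fun v => if F {v} = 0 then ψ v else Φ v with hgdef
  have hgmeas : Measurable g := by
    refine measurable_of_countable_ne hψmeas (hNc.mono ?_)
    intro x hx
    simp only [hgdef, mem_setOf_eq] at hx ⊢
    intro h0
    rw [if_pos h0] at hx
    exact hx rfl
  have hΦg : Φ =ᵐ[F] g := by
    filter_upwards [aeIu] with v hv
    by_cases h0 : F {v} = 0
    · simp only [hgdef, if_pos h0]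
      exact hΦψ v hv h0
    · simp only [hgdef, if_neg h0]
  have hΦint : Integrable Φ F := by
    refine Integrable.mono' (integrable_const C) (hgmeas.aestronglyMeasurable.congr hΦg.symm) ?_
    filter_upwards [aeIu] with v hv
    rw [Real.norm_eq_abs]
    exact hΦb v hv
  -- the common integrand on the quantile side
  set k : ℝ → ℝ := fun t => f (Tq F t) (Qc t) with hkdef
  have hkmeas : Measurable k := hfm.comp ((Tq_measurable hF).prodMk hQc_meas)
  haveI : IsFiniteMeasure (volume.restrict Iu) := by
    constructor
    rw [Measure.restrict_apply_univ, Iu_vol]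
    exact ENNReal.one_lt_top
  have hkIu : IntegrableOn k Iu volume := by
    refine Integrable.mono' (integrable_const C) hkmeas.aestronglyMeasurable ?_
    filter_upwards [ae_restrict_mem Iu_meas] with t _
    rw [Real.norm_eq_abs]
    exact hfb _ (Tq_mem_Iu hF t) _ (hQc_memIu t)
  have hpre : MeasurableSet (Tq F ⁻¹' N) := (Tq_measurable hF) hNmeas
  -- pushforward of a measurable function
  have hpush : ∀ ρ : ℝ → ℝ, Measurable ρ →
      ∫ v, ρ v ∂F = ∫ t in Iu, ρ (Tq F t) ∂volume := by
    intro ρ hρ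
    conv_lhs => rw [map_Tq hF]
    exact integral_map (Tq_measurable hF).aemeasurable hρ.aestronglyMeasurable
  -- non-atom part
  have hnon : ∫ v in Nᶜ, Φ v ∂F = ∫ t in (Tq F ⁻¹' N)ᶜ ∩ Iu, k t ∂volume := by
    have e1 : ∫ v in Nᶜ, Φ v ∂F = ∫ v in Nᶜ, ψ v ∂F := by
      refine setIntegral_congr_ae hNmeas.compl ?_
      filter_upwards [aeIu] with v hv hvN
      exact hΦψ v hv (not_not.1 hvN)
    have e2 : ∫ v in Nᶜ, ψ v ∂F = ∫ v, (Nᶜ).indicator ψ v ∂F :=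
      (integral_indicator hNmeas.compl).symm
    have e3 : ∫ v, (Nᶜ).indicator ψ v ∂F
        = ∫ t in Iu, (Nᶜ).indicator ψ (Tq F t) ∂volume :=
      hpush _ (hψmeas.indicator hNmeas.compl)
    have e4 : ∀ t, (Nᶜ).indicator ψ (Tq F t)
        = (Tq F ⁻¹' Nᶜ).indicator (fun u => ψ (Tq F u)) t := by
      intro t
      by_cases h : Tq F t ∈ N <;> simp [Set.indicator, h]
    have e5 : ∫ t in Iu, (Tq F ⁻¹' Nᶜ).indicator (fun u => ψ (Tq F u)) t ∂volume
        = ∫ t in (Tq F ⁻¹' Nᶜ) ∩ Iu, ψ (Tq F t) ∂volume := by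
      rw [integral_indicator (by rw [preimage_compl]; exact hpre.compl),
        Measure.restrict_restrict (by rw [preimage_compl]; exact hpre.compl)]
    have e6 : ∫ t in (Tq F ⁻¹' Nᶜ) ∩ Iu, ψ (Tq F t) ∂volume
        = ∫ t in (Tq F ⁻¹' N)ᶜ ∩ Iu, k t ∂volume := by
      rw [preimage_compl]
      refine setIntegral_congr_fun (hpre.compl.inter Iu_meas) ?_
      rintro t ⟨htN, htIu⟩
      simp only [hψdef, hkdef]
      rw [cdf_Tq_eq hF hF0 htIu (not_not.1 htN)]
    rw [e1, e2, e3]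
    simp_rw [e4]
    rw [e5, e6]
  -- atom part
  haveI : Countable ↥N := hNc.to_subtype
  have hvIu : ∀ v : ↥N, (v : ℝ) ∈ Iu := fun v => atoms_subset_Iu hF v.2
  have hv0 : ∀ v : ↥N, 0 < (v : ℝ) := fun v => atom_pos hF0 v.2 (hvIu v)
  have hYm : ∀ v : ↥N, MeasurableSet (Yset F (v : ℝ)) :=
    fun v => Yset_measurable hF (hvIu v) (hv0 v)
  have hatom : ∫ v in N, Φ v ∂F = ∫ t in (Tq F ⁻¹' N) ∩ Iu, k t ∂volume := by
    simp only [setIntegral_countable Φ hNc hΦint.integrableOn, measureReal_def]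
    have hsum : ∀ v : ↥N, (F {(v : ℝ)}).toReal • Φ (v : ℝ)
        = ∫ t in Yset F (v : ℝ), k t ∂volume := by
      rintro ⟨v, hv⟩
      have hvIu' : v ∈ Iu := atoms_subset_Iu hF hv
      have hv0' : (0:ℝ) < v := atom_pos hF0 hv hvIu'
      have hYmeas := Yset_measurable hF hvIu' hv0'
      have hQae : Q =ᵐ[unifOn (Yset F v)] Qc := by
        refine Measure.ae_smul_measure ?_ _
        filter_upwards [ae_restrict_mem hYmeas] with t ht
        exact (hQc_eq t ht.1).symm
      have hΦv : Φ v = ((volume (Yset F v))⁻¹).toReal • ∫ t in Yset F v, f v (Qc t) ∂volume := by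
        simp only [hΦdef]
        rw [hsq v hvIu', if_neg hv, Measure.map_congr hQae, integral_map hQc_meas.aemeasurable
          (show Measurable (fun b => f v b) from
            hfm.comp (measurable_const.prodMk measurable_id)).aestronglyMeasurable]
        simp only [unifOn]
        rw [integral_smul_measure]
      rw [hΦv, Yset_vol hF hvIu' hv0', smul_smul, ENNReal.toReal_inv,
        mul_inv_cancel₀ (ENNReal.toReal_ne_zero.2 ⟨hv, F_ne_top hF _⟩), one_smul]
      refine setIntegral_congr_fun hYmeas ?_
      rintro t ⟨htIu, htq⟩
      simp only [hkdef]
      rw [← qinv_eq_Tq htIu.2, htq]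
    rw [tsum_congr hsum]
    have hdisj : Pairwise (Function.onFun Disjoint fun v : ↥N => Yset F (v : ℝ)) := by
      intro v w hvw
      refine Set.disjoint_left.mpr ?_
      rintro t ⟨_, h1⟩ ⟨_, h2⟩
      exact hvw (Subtype.ext (h1.symm.trans h2))
    have hU : (⋃ v : ↥N, Yset F (v : ℝ)) = (Tq F ⁻¹' N) ∩ Iu := by
      ext t
      constructor
      · intro ht
        obtain ⟨v, htv⟩ := mem_iUnion.1 ht
        refine ⟨?_, htv.1⟩
        show Tq F t ∈ N
        rw [← qinv_eq_Tq htv.1.2, htv.2]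
        exact v.2
      · rintro ⟨hN, hIu⟩
        exact mem_iUnion.2 ⟨⟨Tq F t, hN⟩, hIu, qinv_eq_Tq hIu.2⟩
    have hfi : IntegrableOn k (⋃ v : ↥N, Yset F (v : ℝ)) volume := by
      refine hkIu.mono_set ?_
      exact iUnion_subset fun v t ht => ht.1
    rw [← integral_iUnion hYm hdisj hfi, hU]
  refine ⟨hΦint, ?_⟩
  calc ∫ v, Φ v ∂F = (∫ v in N, Φ v ∂F) + (∫ v in Nᶜ, Φ v ∂F) :=
        (integral_add_compl hNmeas hΦint).symm
    _ = (∫ t in (Tq F ⁻¹' N) ∩ Iu, k t ∂volume)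
        + (∫ t in (Tq F ⁻¹' N)ᶜ ∩ Iu, k t ∂volume) := by rw [hnon, hatom]
    _ = ∫ t in Iu, k t ∂volume := by
        rw [← Measure.restrict_restrict hpre, ← Measure.restrict_restrict hpre.compl]
        exact integral_add_compl hpre hkIu

end Key

section Main
open Filter Topology
open scoped ENNReal

/-- Lemma: quantile-based bidding: for a value distribution `F` on `[0,1]`
with `F({0}) = 0` and a quantile-based bidding strategy `Q` (strictly increasing, absolutely
continuous, mapping `[0,1]` to `[0,1]`) with corresponding bidding strategy `s_Q`, for every
`y ∈ [0,1]` and `h = Q(y)` the expected utility is `∫_y^1 (F⁻(t) − Q(t)) dt`, and the induced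
bid distribution is the pushforward of the uniform distribution on `[0,1]` under `Q`. -/
theorem quantile_strategy_utility
    (F : Measure ℝ) (hF : IsProbOn F) (hF0 : F {0} = 0)
    (Q : ℝ → ℝ) (hQmono : StrictMonoOn Q Iu) (hQac : AbsContOn01 Q)
    (hQmaps : MapsTo Q Iu Iu)
    (s : Kernel ℝ ℝ) (hs : IsQuantileStrategy F Q s) :
    (∀ y ∈ Iu, eUtil F s (Measure.dirac (Q y)) = ∫ t in y..(1:ℝ), (qinv F t - Q t))
      ∧ bidDist F s = (unifOn Iu).map Q := by
  haveI := hF.1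
  haveI := hs.1.1
  haveI : IsFiniteMeasure (volume.restrict Iu) := by
    constructor
    rw [Measure.restrict_apply_univ, Iu_vol]
    exact ENNReal.one_lt_top
  set Qc : ℝ → ℝ := fun t => Q (clamp01 t) with hQcdef
  have hQc_mono : Monotone Qc := fun a b hab =>
    hQmono.monotoneOn (clamp01_mem a) (clamp01_mem b) (clamp01_mono hab)
  have hQc_meas : Measurable Qc := hQc_mono.measurable
  constructor
  · -- utility formula
    intro y hy
    set f : ℝ → ℝ → ℝ := fun v b => util b (Q y) v with hfdef
    have hfm : Measurable (Function.uncurry f) := by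
      have : Function.uncurry f =
          fun p : ℝ × ℝ => (p.1 - p.2) * (if Q y ≤ p.2 then (1:ℝ) else 0) := rfl
      rw [this]
      exact (measurable_fst.sub measurable_snd).mul
        (Measurable.ite (measurableSet_le measurable_const measurable_snd)
          measurable_const measurable_const)
    have hfb : ∀ v ∈ Iu, ∀ b ∈ Iu, |f v b| ≤ 1 := by
      intro v hv b hb
      simp only [hfdef, util]
      rw [abs_mul]
      have h2 : |v - b| ≤ 1 := abs_le.2 ⟨by linarith [hv.1, hb.2], by linarith [hv.2, hb.1]⟩
      have h3 : |(if Q y ≤ b then (1:ℝ) else 0)| ≤ 1 := by split <;> simp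
      calc |v - b| * |(if Q y ≤ b then (1:ℝ) else 0)| ≤ 1 * 1 :=
            mul_le_mul h2 h3 (abs_nonneg _) zero_le_one
        _ = 1 := mul_one 1
    obtain ⟨_, hkey⟩ := key_identity F hF hF0 Q hQmono hQmaps s hs f hfm 1 hfb
    have h1 : eUtil F s (Measure.dirac (Q y)) = ∫ v, (∫ b, f v b ∂ s v) ∂F := by
      unfold eUtil
      refine integral_congr_ae (Eventually.of_forall fun v => ?_)
      exact integral_dirac (fun h => ∫ b, util b h v ∂ s v) (Q y)
    rw [h1, hkey]
    have h4 : ∫ t in Iu, f (Tq F t) (Q (clamp01 t)) ∂volume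
        = ∫ t in Iu, (Ici y).indicator (fun u => Tq F u - Q u) t ∂volume := by
      refine setIntegral_congr_fun Iu_meas (fun t ht => ?_)
      simp only [hfdef, util, clamp01_of_mem ht]
      by_cases hyt : y ≤ t
      · rw [if_pos ((hQmono.le_iff_le hy ht).2 hyt), indicator_of_mem (mem_Ici.2 hyt)]
        ring
      · rw [if_neg (fun hc => hyt ((hQmono.le_iff_le hy ht).1 hc)),
          indicator_of_notMem (by simpa using hyt)]
        ring
    rw [h4, integral_indicator measurableSet_Ici,
      Measure.restrict_restrict measurableSet_Ici]
    have h5 : Ici y ∩ Iu = Icc y 1 := by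
      ext t
      simp only [mem_inter_iff, mem_Ici, Iu, mem_Icc]
      constructor
      · rintro ⟨ht1, _, ht3⟩; exact ⟨ht1, ht3⟩
      · rintro ⟨ht1, ht2⟩; exact ⟨ht1, le_trans hy.1 ht1, ht2⟩
    rw [h5, integral_Icc_eq_integral_Ioc, ← intervalIntegral.integral_of_le hy.2]
    refine intervalIntegral.integral_congr (fun t ht => ?_)
    rw [uIcc_of_le hy.2] at ht
    rw [qinv_eq_Tq ht.2]
  · -- bid distribution
    have hmapeq : (unifOn Iu).map Q = (volume.restrict Iu).map Qc := by
      have h0 : unifOn Iu = volume.restrict Iu := by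
        rw [unifOn, Iu_vol]; simp
      rw [h0]
      refine Measure.map_congr ?_
      filter_upwards [ae_restrict_mem Iu_meas] with t ht
      simp only [hQcdef, clamp01_of_mem ht]
    haveI : IsFiniteMeasure (bidDist F s) := by
      constructor
      rw [bidDist, Measure.bind_apply MeasurableSet.univ (Kernel.measurable s).aemeasurable]
      have h1 : ∫⁻ v, s v univ ∂F = 1 := by simp
      rw [h1]
      exact ENNReal.one_lt_top
    refine Measure.ext_of_Iic (bidDist F s) _ (fun x => ?_)
    set f : ℝ → ℝ → ℝ := fun _ b => (Iic x).indicator (fun _ => (1:ℝ)) b with hfdef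
    have hfm : Measurable (Function.uncurry f) := by
      have : Function.uncurry f
          = fun p : ℝ × ℝ => (Iic x).indicator (fun _ => (1:ℝ)) p.2 := rfl
      rw [this]
      exact ((measurable_const.indicator measurableSet_Iic).comp measurable_snd)
    have hfb : ∀ v ∈ Iu, ∀ b ∈ Iu, |f v b| ≤ 1 := by
      intro v _ b _
      simp only [hfdef, Set.indicator]
      split <;> simp
    obtain ⟨hint, hkey⟩ := key_identity F hF hF0 Q hQmono hQmaps s hs f hfm 1 hfb
    have hpt : ∀ v, s v (Iic x) = ENNReal.ofReal (∫ b, f v b ∂ s v) := by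
      intro v
      have h1 : ∫ b, f v b ∂ s v = ((s v) (Iic x)).toReal :=
        integral_indicator_one measurableSet_Iic
      rw [h1, ENNReal.ofReal_toReal (measure_ne_top _ _)]
    have hnn : 0 ≤ᵐ[F] fun v => ∫ b, f v b ∂ s v := by
      refine Eventually.of_forall (fun v => integral_nonneg (fun b => ?_))
      exact Set.indicator_nonneg (fun _ _ => zero_le_one) b
    have e : ∫ t in Iu, f (Tq F t) (Q (clamp01 t)) ∂volume
        = ((volume.restrict Iu) (Qc ⁻¹' (Iic x))).toReal := by
      rw [← measureReal_def, ← integral_indicator_one (μ := volume.restrict Iu) (hQc_meas measurableSet_Iic)]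
      refine integral_congr_ae (Eventually.of_forall (fun t => ?_))
      simp only [hfdef, Set.indicator, mem_preimage]
      rfl
    calc bidDist F s (Iic x)
        = ∫⁻ v, s v (Iic x) ∂F :=
          Measure.bind_apply measurableSet_Iic (Kernel.measurable s).aemeasurable
      _ = ∫⁻ v, ENNReal.ofReal (∫ b, f v b ∂ s v) ∂F := by
          refine lintegral_congr (fun v => hpt v)
      _ = ENNReal.ofReal (∫ v, (∫ b, f v b ∂ s v) ∂F) :=
          (MeasureTheory.ofReal_integral_eq_lintegral_ofReal hint hnn).symm
      _ = ENNReal.ofReal (((volume.restrict Iu) (Qc ⁻¹' (Iic x))).toReal) := by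
          rw [hkey, e]
      _ = (volume.restrict Iu) (Qc ⁻¹' (Iic x)) :=
          ENNReal.ofReal_toReal (measure_ne_top _ _)
      _ = ((volume.restrict Iu).map Qc) (Iic x) :=
          (Measure.map_apply hQc_meas measurableSet_Iic).symm
      _ = ((unifOn Iu).map Q) (Iic x) := by rw [hmapeq]


end Main

end FPA
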